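/- Let z ∈ [0,1] and let Q₁=(1,1,1), Q₂=(1,0,0), Q₃=(0,1,0), Q₄=(0,0,0) in ℝ³. Then the set {(x, y) ∈ ℝ² : (x, y, z) belongs to the convex hull of {Q₁, Q₂, Q₃, Q₄}} equals the set T_z = {(x, y) : z ≤ x ≤ 1 and z ≤ y ≤ 1 + z − x}. -/
import Mathlib


/-- Let `z ∈ [0,1]` and let `Q₁=(1,1,1)`, `Q₂=(1,0,0)`, `Q₃=(0,1,0)`,
`Q₄=(0,0,0)` in `ℝ³`. Then the set of `(x, y) ∈ ℝ²` such that `(x, y, z)` belongs to the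
convex hull of `{Q₁, Q₂, Q₃, Q₄}` equals
`T_z = {(x, y) : z ≤ x ≤ 1 and z ≤ y ≤ 1 + z − x}`. -/
theorem stmt2 (z : ℝ) (hz : z ∈ Set.Icc (0 : ℝ) 1) :
    {p : ℝ × ℝ | (![p.1, p.2, z]) ∈ convexHull ℝ
        ({![1, 1, 1], ![1, 0, 0], ![0, 1, 0], ![0, 0, 0]} : Set (Fin 3 → ℝ))} =
      {p : ℝ × ℝ | z ≤ p.1 ∧ p.1 ≤ 1 ∧ z ≤ p.2 ∧ p.2 ≤ 1 + z - p.1} := by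
  obtain ⟨hz0, hz1⟩ := hz
  ext p
  constructor
  · intro hp
    set C : Set (Fin 3 → ℝ) :=
      {v | v 2 - v 0 ≤ 0} ∩ {v | v 0 ≤ 1} ∩ {v | v 2 - v 1 ≤ 0} ∩
        {v | v 1 + v 0 - v 2 ≤ 1} with hCdef
    have l1 : IsLinearMap ℝ (fun v : Fin 3 → ℝ => v 2 - v 0) :=
      ⟨fun a b => by simp; ring, fun c a => by simp [smul_eq_mul]; ring⟩
    have l2 : IsLinearMap ℝ (fun v : Fin 3 → ℝ => v 0) :=
      ⟨fun a b => by simp, fun c a => by simp [smul_eq_mul]⟩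
    have l3 : IsLinearMap ℝ (fun v : Fin 3 → ℝ => v 2 - v 1) :=
      ⟨fun a b => by simp; ring, fun c a => by simp [smul_eq_mul]; ring⟩
    have l4 : IsLinearMap ℝ (fun v : Fin 3 → ℝ => v 1 + v 0 - v 2) :=
      ⟨fun a b => by simp; ring, fun c a => by simp [smul_eq_mul]; ring⟩
    have hconv : Convex ℝ C :=
      (((convex_halfSpace_le l1 0).inter (convex_halfSpace_le l2 1)).inter
        (convex_halfSpace_le l3 0)).inter (convex_halfSpace_le l4 1)
    have hsub : ({![1, 1, 1], ![1, 0, 0], ![0, 1, 0], ![0, 0, 0]} : Set (Fin 3 → ℝ)) ⊆ C := by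
      intro v hv
      simp only [Set.mem_insert_iff, Set.mem_singleton_iff] at hv
      rcases hv with rfl | rfl | rfl | rfl <;>
        simp [hCdef, Set.mem_inter_iff]
    have := convexHull_min hsub hconv hp
    simp only [hCdef, Set.mem_inter_iff, Set.mem_setOf_eq] at this
    obtain ⟨⟨⟨h1, h2⟩, h3⟩, h4⟩ := this
    simp only [Matrix.cons_val_zero, Matrix.cons_val_one, Matrix.head_cons,
      Matrix.cons_val_two, Matrix.tail_cons] at h1 h2 h3 h4
    refine ⟨by linarith, by linarith, by linarith, by linarith⟩
  · rintro ⟨h1, h2, h3, h4⟩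
    have hhull := convex_convexHull ℝ
      ({![1, 1, 1], ![1, 0, 0], ![0, 1, 0], ![0, 0, 0]} : Set (Fin 3 → ℝ))
    set q : Fin 4 → (Fin 3 → ℝ) := ![![1, 1, 1], ![1, 0, 0], ![0, 1, 0], ![0, 0, 0]] with hq
    set w : Fin 4 → ℝ := ![z, p.1 - z, p.2 - z, 1 + z - p.1 - p.2] with hw
    have hw0 : ∀ i ∈ Finset.univ, 0 ≤ w i := by
      intro i _
      fin_cases i <;> simp [hw] <;> linarith
    have hw1 : ∑ i ∈ Finset.univ, w i = 1 := by
      simp [hw, Fin.sum_univ_four]; ring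
    have hqmem : ∀ i ∈ Finset.univ, q i ∈ convexHull ℝ
        ({![1, 1, 1], ![1, 0, 0], ![0, 1, 0], ![0, 0, 0]} : Set (Fin 3 → ℝ)) := by
      intro i _
      apply subset_convexHull
      fin_cases i <;> simp [hq]
    have hmem := hhull.sum_mem hw0 hw1 hqmem
    have heq : ∑ i ∈ Finset.univ, w i • q i = ![p.1, p.2, z] := by
      funext j
      simp [hw, hq, Fin.sum_univ_four]
      fin_cases j <;> simp
    rw [heq] at hmem
    exact hmem
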